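/- Define φ_q(τ) = ∫₀^τ ξ^(q-1) / log((1+2ξ)/ξ) dξ for τ ≥ 0 and q > 1 (the integrand extended by 0 at ξ = 0). Then for all τ > 0, (q-1)·φ_q'(τ) ≤ τ·φ_q''(τ) ≤ (q + (log 2)⁻¹ - 1)·φ_q'(τ). -/

import Mathlib

open intervalIntegral

theorem phi_q_derivative_bounds (q : ℝ) (hq : 1 < q)
    (φq : ℝ → ℝ)
    (hφq : φq = fun τ : ℝ => ∫ ξ in (0:ℝ)..τ, ξ^(q-1) / Real.log ((1 + 2*ξ)/ξ)) :
    ∀ τ : ℝ, 0 < τ →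
      (q - 1) * deriv φq τ ≤ τ * deriv (deriv φq) τ ∧
      τ * deriv (deriv φq) τ ≤ (q + (Real.log 2)⁻¹ - 1) * deriv φq τ := by
  have hlog2 : (0:ℝ) < Real.log 2 := Real.log_pos one_lt_two
  set L : ℝ → ℝ := fun t => Real.log ((1 + 2*t)/t) with hLdef
  set f : ℝ → ℝ := fun t => t^(q-1) / L t with hfdef
  have hargpos : ∀ t : ℝ, 0 < t → (0:ℝ) < (1 + 2*t)/t := by
    intro t ht
    positivity
  have hkey : ∀ t : ℝ, 0 < t → Real.log 2 ≤ L t := by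
    intro t ht
    have h2 : (2:ℝ) ≤ (1 + 2*t)/t := by
      rw [le_div_iff₀ ht]; linarith
    exact Real.log_le_log two_pos h2
  have hLpos : ∀ t : ℝ, 0 < t → 0 < L t := fun t ht => lt_of_lt_of_le hlog2 (hkey t ht)
  have hmeas : Measurable f := by
    apply Measurable.div
    · fun_prop
    · exact Real.measurable_log.comp ((measurable_const.add (measurable_const.mul measurable_id)).div measurable_id)
  have hcont : ∀ t : ℝ, 0 < t → ContinuousAt f t := by
    intro t ht
    have hu : ContinuousAt (fun s : ℝ => (1 + 2*s)/s) t :=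
      ((continuousAt_const.add (continuousAt_const.mul continuousAt_id)).div continuousAt_id ht.ne')
    have hLc : ContinuousAt L t := hu.log (hargpos t ht).ne'
    have hrc : ContinuousAt (fun s : ℝ => s^(q-1)) t :=
      Real.continuousAt_rpow_const t (q-1) (Or.inl ht.ne')
    exact hrc.div hLc (hLpos t ht).ne'
  have hint : ∀ t : ℝ, 0 < t → IntervalIntegrable f MeasureTheory.volume 0 t := by
    intro t ht
    rw [intervalIntegrable_iff]
    constructor
    · exact hmeas.aestronglyMeasurable
    · have huIoc : Set.uIoc (0:ℝ) t = Set.Ioc 0 t := Set.uIoc_of_le ht.le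
      rw [huIoc]
      apply MeasureTheory.HasFiniteIntegral.of_bounded (C := t^(q-1)/Real.log 2)
      filter_upwards [MeasureTheory.ae_restrict_mem measurableSet_Ioc] with x hx
      have hx0 : 0 < x := hx.1
      have hLx := hLpos x hx0
      have hfx : f x = x^(q-1) / L x := rfl
      have h1 : x^(q-1) ≤ t^(q-1) := Real.rpow_le_rpow hx0.le hx.2 (by linarith)
      have h2 : 0 ≤ f x := div_nonneg (Real.rpow_nonneg hx0.le _) hLx.le
      rw [Real.norm_eq_abs, abs_of_nonneg h2]
      calc f x = x^(q-1) / L x := rfl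
        _ ≤ t^(q-1) / Real.log 2 :=
          div_le_div₀ (Real.rpow_nonneg (le_of_lt ht) _) h1 hlog2 (hkey x hx0)
  have hderiv1 : ∀ t : ℝ, 0 < t → HasDerivAt φq (f t) t := by
    intro t ht
    rw [hφq]
    exact intervalIntegral.integral_hasDerivAt_right (hint t ht)
      hmeas.stronglyMeasurable.stronglyMeasurableAtFilter
      (hcont t ht)
  have hd1 : ∀ t : ℝ, 0 < t → deriv φq t = f t := fun t ht => (hderiv1 t ht).deriv
  intro τ hτ
  have hne : ((1 + 2*τ)/τ : ℝ) ≠ 0 := (hargpos τ hτ).ne'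
  have hLτ : 0 < L τ := hLpos τ hτ
  -- derivative of f at τ
  have hu : HasDerivAt (fun s : ℝ => (1 + 2*s)/s) ((2*τ - (1+2*τ)*1)/τ^2) τ := by
    have h1 : HasDerivAt (fun s : ℝ => 1 + 2*s) 2 τ := by
      simpa using ((hasDerivAt_id τ).const_mul 2).const_add 1
    exact h1.div (hasDerivAt_id τ) hτ.ne'
  have hLd : HasDerivAt L (((2*τ - (1+2*τ)*1)/τ^2) / ((1+2*τ)/τ)) τ := hu.log hne
  have hA : HasDerivAt (fun s : ℝ => s^(q-1)) ((q-1)*τ^(q-1-1)) τ :=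
    Real.hasDerivAt_rpow_const (Or.inl hτ.ne')
  have hfd : HasDerivAt f (((q-1)*τ^(q-1-1) * L τ - τ^(q-1) * (((2*τ - (1+2*τ)*1)/τ^2) / ((1+2*τ)/τ))) / (L τ)^2) τ :=
    hA.div hLd hLτ.ne'
  -- deriv (deriv φq) τ = deriv f τ
  have heq : deriv φq =ᶠ[nhds τ] f := by
    filter_upwards [isOpen_Ioi.mem_nhds hτ] with t ht
    exact hd1 t ht
  have hdd : deriv (deriv φq) τ = deriv f τ := heq.deriv_eq
  rw [hdd, hd1 τ hτ, hfd.deriv]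
  -- algebraic identity
  have hApos : 0 < τ^(q-1) := Real.rpow_pos_of_pos hτ _
  have hA' : τ^(q-1-1) = τ^(q-1)/τ := by
    rw [show q-1-1 = (q-1) - 1 by ring, Real.rpow_sub hτ, Real.rpow_one]
  have hfpos : 0 < f τ := div_pos hApos hLτ
  have hiden : τ * (((q-1)*τ^(q-1-1) * L τ - τ^(q-1) * (((2*τ - (1+2*τ)*1)/τ^2) / ((1+2*τ)/τ))) / (L τ)^2)
      = f τ * ((q-1) + ((1+2*τ) * L τ)⁻¹) := by
    rw [hA', hfdef]
    have h12 : (1 + 2*τ : ℝ) ≠ 0 := by positivity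
    field_simp
    ring
  rw [hiden]
  have hc1 : 0 < ((1+2*τ) * L τ)⁻¹ := by positivity
  have hc2 : ((1+2*τ) * L τ)⁻¹ ≤ (Real.log 2)⁻¹ := by
    apply inv_anti₀ hlog2
    calc Real.log 2 = 1 * Real.log 2 := (one_mul _).symm
      _ ≤ (1+2*τ) * L τ := by
        apply mul_le_mul (by linarith) (hkey τ hτ) hlog2.le (by linarith)
  constructor
  · nlinarith
  · nlinarith
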